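/- arXiv:2505.19521 — 2 statements merged into one kernel-verified Lean document; each statement's English description precedes it below -/
import Mathlib

section
/- Let H be a real inner product space, F : ℝ → H differentiable on [0, ∞), and λ > 0, δ ≥ 0 constants such that ⟪F(t), F'(t)⟫ ≤ −λ · ‖F(t)‖² + δ · ‖F(t)‖ for all t ≥ 0. Then for all t ≥ 0, ‖F(t)‖ ≤ ‖F(0)‖ · exp(−λ · t / 2) + δ / λ. -/
open Set Real

/-- Convergence of the learning dynamics: if `F : ℝ → H` is differentiable on `[0, ∞)`
in a real inner product space and satisfies the dissipation inequality
`⟪F(t), F'(t)⟫ ≤ −λ ‖F(t)‖² + δ ‖F(t)‖`, then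
`‖F(t)‖ ≤ ‖F(0)‖ exp (−λ t / 2) + δ / λ` for all `t ≥ 0`. -/
theorem learning_convergence
    {H : Type*} [NormedAddCommGroup H] [InnerProductSpace ℝ H]
    (F F' : ℝ → H)
    (hF : ∀ t ∈ Set.Ici (0 : ℝ), HasDerivWithinAt F (F' t) (Set.Ici 0) t)
    (lam δ : ℝ) (hlam : 0 < lam) (hδ : 0 ≤ δ)
    (hineq : ∀ t ≥ (0 : ℝ),
      (inner ℝ (F t) (F' t) : ℝ) ≤ -lam * ‖F t‖ ^ 2 + δ * ‖F t‖) :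
    ∀ t ≥ (0 : ℝ), ‖F t‖ ≤ ‖F 0‖ * Real.exp (-lam * t / 2) + δ / lam := by
  intro t ht
  -- the squared norm and its derivative
  set u : ℝ → ℝ := fun s => ‖F s‖ ^ 2 with hu
  set u' : ℝ → ℝ := fun s => 2 * (inner ℝ (F s) (F' s) : ℝ) with hu'
  have hud : ∀ s ∈ Set.Ici (0 : ℝ), HasDerivWithinAt u (u' s) (Set.Ici 0) s := by
    intro s hs
    have h := (hF s hs).inner ℝ (hF s hs)
    have : HasDerivWithinAt (fun r => (inner ℝ (F r) (F r) : ℝ))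
        (2 * (inner ℝ (F s) (F' s) : ℝ)) (Set.Ici 0) s := by
      refine h.congr_deriv ?_
      rw [real_inner_comm (F' s) (F s)]; ring
    refine this.congr (fun r _ => ?_) ?_ <;>
      simp [u, real_inner_self_eq_norm_sq]
  -- Gronwall for u on [0, t]
  have key : u t ≤ gronwallBound (u 0) (-lam) (δ ^ 2 / lam) (t - 0) := by
    refine le_gronwallBound_of_liminf_deriv_right_le
      (f := u) (f' := u') (a := 0) (b := t) ?_ ?_ le_rfl ?_ t ⟨ht, le_rfl⟩
    · exact fun s hs => (hud s hs.1).continuousWithinAt.mono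
        (fun r hr => hr.1)
    · intro x hx r hr
      have hd : HasDerivWithinAt u (u' x) (Set.Ioi x) x :=
        (hud x hx.1).mono (fun z hz => le_trans hx.1 (le_of_lt hz))
      have := (hasDerivWithinAt_iff_tendsto_slope.1 hd)
      rw [show Set.Ioi x \ {x} = Set.Ioi x from Set.diff_singleton_eq_self (fun h => lt_irrefl x h)] at this
      have hev : ∀ᶠ z in nhdsWithin x (Set.Ioi x), slope u x z < r :=
        this (Iio_mem_nhds hr)
      refine hev.frequently.mono fun z hz => ?_
      rwa [slope_def_field, div_eq_inv_mul] at hz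
    · intro x hx
      have h1 := hineq x hx.1
      have h2 : 2 * δ * ‖F x‖ ≤ lam * ‖F x‖ ^ 2 + δ ^ 2 / lam := by
        have hl : Real.sqrt lam ^ 2 = lam := Real.sq_sqrt hlam.le
        have hlpos : (0:ℝ) < Real.sqrt lam := Real.sqrt_pos.2 hlam
        have hb2 : (δ / Real.sqrt lam) ^ 2 = δ ^ 2 / lam := by rw [div_pow, hl]
        have hab : Real.sqrt lam * ‖F x‖ * (δ / Real.sqrt lam) = δ * ‖F x‖ := by
          field_simp
        nlinarith [sq_nonneg (Real.sqrt lam * ‖F x‖ - δ / Real.sqrt lam), hl, hb2, hab]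
      simp only [u', u]
      nlinarith
  -- unfold the Gronwall bound
  have hbound : gronwallBound (u 0) (-lam) (δ ^ 2 / lam) (t - 0)
      ≤ ‖F 0‖ ^ 2 * Real.exp (-lam * t) + (δ / lam) ^ 2 := by
    rw [gronwallBound_of_K_ne_0 (neg_ne_zero.2 hlam.ne')]
    have he : Real.exp (-lam * t) ≤ 1 :=
      Real.exp_le_one_iff.2 (by nlinarith)
    have hepos : 0 < Real.exp (-lam * t) := Real.exp_pos _
    have : δ ^ 2 / lam / -lam * (Real.exp (-lam * (t - 0)) - 1)
        = (δ / lam) ^ 2 * (1 - Real.exp (-lam * t)) := by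
      field_simp; ring
    simp only [sub_zero] at this ⊢
    rw [this]
    have h2 : (δ / lam) ^ 2 * (1 - Real.exp (-lam * t)) ≤ (δ / lam) ^ 2 := by
      nlinarith [sq_nonneg (δ / lam)]
    simp only [u]
    nlinarith
  -- take square roots
  have hut : ‖F t‖ ^ 2 ≤ (‖F 0‖ * Real.exp (-lam * t / 2)) ^ 2 + (δ / lam) ^ 2 := by
    have he2 : Real.exp (-lam * t / 2) ^ 2 = Real.exp (-lam * t) := by
      rw [← Real.exp_nat_mul]; ring_nf
    calc ‖F t‖ ^ 2 ≤ ‖F 0‖ ^ 2 * Real.exp (-lam * t) + (δ / lam) ^ 2 :=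
          le_trans key hbound
      _ = (‖F 0‖ * Real.exp (-lam * t / 2)) ^ 2 + (δ / lam) ^ 2 := by
          rw [mul_pow, he2]
  have ha : 0 ≤ ‖F 0‖ * Real.exp (-lam * t / 2) := by positivity
  have hb : 0 ≤ δ / lam := by positivity
  nlinarith [norm_nonneg (F t), mul_nonneg ha hb]
end

section
/- Let X be a metric space, Y a real normed vector space, b : X × Y → ℝ with |b(x, y₁) − b(x, y₂)| ≤ L_b · ‖y₁ − y₂‖ for all x ∈ X, y₁, y₂ ∈ Y (L_b > 0), h : X → Y, x : ℝ → X a trajectory, and v : ℝ → Y with ‖v(t)‖ ≤ δ_v for all t ≥ 0, where δ_v > 0. Suppose K > 0, the nominal certificate c(t) := b(x(t), h(x(t))) is differentiable on [0, ∞) with c'(t) ≥ −K · c(t) for all t ≥ 0, c(0) = b₀ > 0, and L_b · δ_v < b₀. Then for every t with 0 ≤ t < (1/K) · log(b₀ / (L_b · δ_v)), one has b(x(t), h(x(t)) + v(t)) > 0. -/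
/-- Deterministic safety under bounded measurement noise: if the barrier `b` is
`L_b`-Lipschitz in the measurement argument, the nominal certificate
`c(t) = b (x t) (h (x t))` satisfies `c' ≥ −K c` with `c 0 = b₀ > 0`, and the
measurement noise is bounded by `δ_v` with `L_b δ_v < b₀`, then the noisy certificate
`b (x t) (h (x t) + v t)` remains strictly positive for all
`0 ≤ t < (1/K) log (b₀ / (L_b δ_v))`. -/
theorem deterministic_safety_horizon
    {X : Type*} {Y : Type*} [NormedAddCommGroup Y] [NormedSpace ℝ Y]
    (b : X → Y → ℝ) (Lb : ℝ) (hLb : 0 < Lb)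
    (hbLip : ∀ (x : X) (y₁ y₂ : Y), |b x y₁ - b x y₂| ≤ Lb * ‖y₁ - y₂‖)
    (h : X → Y) (x : ℝ → X) (v : ℝ → Y)
    (δv : ℝ) (hδv : 0 < δv) (hv : ∀ t ≥ (0 : ℝ), ‖v t‖ ≤ δv)
    (K : ℝ) (hK : 0 < K) (c' : ℝ → ℝ)
    (hc : ∀ t ∈ Set.Ici (0 : ℝ),
      HasDerivWithinAt (fun s => b (x s) (h (x s))) (c' t) (Set.Ici 0) t)
    (hc' : ∀ t ≥ (0 : ℝ), c' t ≥ -K * b (x t) (h (x t)))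
    (b₀ : ℝ) (hb0 : b (x 0) (h (x 0)) = b₀) (hb₀pos : 0 < b₀)
    (hnoise : Lb * δv < b₀) :
    ∀ t : ℝ, 0 ≤ t → t < (1 / K) * Real.log (b₀ / (Lb * δv)) →
      0 < b (x t) (h (x t) + v t) := by
  intro t ht htlt
  set c : ℝ → ℝ := fun s => b (x s) (h (x s)) with hcdef
  set g : ℝ → ℝ := fun s => c s * Real.exp (K * s) with hgdef
  have hexp : ∀ s : ℝ, HasDerivAt (fun u => Real.exp (K * u)) (Real.exp (K * s) * K) s := by
    intro s
    simpa using ((hasDerivAt_id s).const_mul K).exp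
  have hgderiv : ∀ s ∈ Set.Ici (0 : ℝ),
      HasDerivWithinAt g (c' s * Real.exp (K * s) + c s * (Real.exp (K * s) * K))
        (Set.Ici 0) s := by
    intro s hs
    exact (hc s hs).mul ((hexp s).hasDerivWithinAt)
  have hmono : MonotoneOn g (Set.Ici (0 : ℝ)) := by
    apply monotoneOn_of_hasDerivWithinAt_nonneg (convex_Ici 0)
      (f' := fun s => c' s * Real.exp (K * s) + c s * (Real.exp (K * s) * K))
    · intro s hs
      exact (hgderiv s hs).continuousWithinAt
    · intro s hs
      rw [interior_Ici] at hs
      exact ((hgderiv s (Set.mem_Ici.mpr (le_of_lt hs))).mono (by rw [interior_Ici]; exact Set.Ioi_subset_Ici_self))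
    · intro s hs
      rw [interior_Ici] at hs
      have h1 := hc' s (le_of_lt hs)
      have h2 : (0:ℝ) < Real.exp (K * s) := Real.exp_pos _
      nlinarith [h2]
  have hg0 : g 0 = b₀ := by simp [hgdef, hcdef, hb0]
  have hgt : b₀ ≤ g t := by
    rw [← hg0]
    exact hmono (Set.self_mem_Ici) ht ht
  -- c t ≥ b₀ * exp (-K t)
  have hct : b₀ * Real.exp (-(K * t)) ≤ c t := by
    have hgt' : b₀ ≤ c t * Real.exp (K * t) := hgt
    have h2 : (0:ℝ) < Real.exp (K * t) := Real.exp_pos _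
    have h3 := mul_le_mul_of_nonneg_right hgt' (le_of_lt (inv_pos.mpr h2))
    rw [mul_assoc, mul_inv_cancel₀ h2.ne', mul_one] at h3
    rw [Real.exp_neg]
    exact h3
  -- threshold
  have hKt : K * t < Real.log (b₀ / (Lb * δv)) := by
    have h5 := mul_lt_mul_of_pos_left htlt hK
    rw [← mul_assoc, mul_one_div, div_self hK.ne', one_mul] at h5
    exact h5
  have hpos : Lb * δv < b₀ * Real.exp (-(K * t)) := by
    have hq : (0:ℝ) < Lb * δv := mul_pos hLb hδv
    have h6 : Real.exp (K * t) < b₀ / (Lb * δv) := by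
      rw [← Real.exp_log (div_pos hb₀pos hq)]
      exact Real.exp_lt_exp.mpr hKt
    rw [lt_div_iff₀ hq] at h6
    have h2 : (0:ℝ) < Real.exp (K * t) := Real.exp_pos _
    have h4 := mul_lt_mul_of_pos_right h6 (inv_pos.mpr h2)
    rw [mul_comm (Real.exp (K * t)) (Lb * δv), mul_assoc, mul_inv_cancel₀ h2.ne', mul_one] at h4
    rw [Real.exp_neg]
    exact h4
  -- Lipschitz bound
  have hlip := hbLip (x t) (h (x t) + v t) (h (x t))
  simp only [add_sub_cancel_left] at hlip
  have habs : c t - Lb * ‖v t‖ ≤ b (x t) (h (x t) + v t) := by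
    have := abs_le.mp hlip
    simp only [hcdef]
    linarith [this.1]
  have hnorm : Lb * ‖v t‖ ≤ Lb * δv := by
    exact mul_le_mul_of_nonneg_left (hv t ht) (le_of_lt hLb)
  linarith
end
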